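/- Let σ : V × V → V satisfy σ(x,y) ∈ N[x] for all x,y ∈ V, and let T ∈ ℕ be such that σ guarantees capture within T rounds in the turn-based game: for all x₀,y₀ ∈ V and every sequence (y_t)_{t≥0} with y_{t+1} ∈ N[y_t] for all t, the sequence defined by x_{t+1} = σ(x_t, y_t) satisfies x_{t+1} = y_t for some t < T. Let π_C^# be the memoryless randomized cop strategy in the concurrent game defined by: from position (x,y), sample a vertex v uniformly at random from N[y] and move the cop to σ(x,v). Then for every robber strategy π_R and every initial position (x,y) ∈ V², the set of infinite play histories in which the robber is never captured has probability zero under the play measure induced by π_C^#, π_R, and (x,y); i.e., π_C^# captures the robber with probability one. -/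

import Mathlib

open Finset Filter

noncomputable section

variable {V : Type*} [Fintype V] [DecidableEq V]

/-- The closed neighborhood `N[u]` of a vertex `u`: `u` together with its neighbors. -/
def nbhd (G : SimpleGraph V) [DecidableRel G.Adj] (u : V) : Finset V :=
  insert u (G.neighborFinset u)

lemma nbhd_nonempty (G : SimpleGraph V) [DecidableRel G.Adj] (u : V) :
    (nbhd G u).Nonempty :=
  ⟨u, Finset.mem_insert_self u _⟩

/-! ### The single-cop concurrent game, with the expected-capture-time payoff -/

/-- A randomized strategy in the single-cop concurrent game: to each finite history of
positions (cop location, robber location) it assigns a distribution over next moves. -/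
abbrev Strat (V : Type*) := List (V × V) → PMF V

/-- A strategy is memoryless if the distribution it assigns depends only on the
current (most recent) position. -/
def Memoryless (π : Strat V) : Prop :=
  ∀ h₁ h₂ : List (V × V), h₁.getLast? = h₂.getLast? → π h₁ = π h₂

/-- The single-cop CCCR transition function: simultaneous moves within closed
neighborhoods (illegal moves ignored), capture positions are absorbing, and a swap of
adjacent vertices is an \"en passant\" capture. -/
def step1 (G : SimpleGraph V) [DecidableRel G.Adj] (p : V × V) (u w : V) : V × V :=
  if p.1 = p.2 then p
  else
    let u' := if u ∈ nbhd G p.1 then u else p.1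
    let w' := if w ∈ nbhd G p.2 then w else p.2
    if u' = p.2 ∧ w' = p.1 then (u', u') else (u', w')

/-- The distribution over histories of the first `t+1` positions, induced by the
strategies `πC, πR` and the initial position `init`. -/
def play1 (G : SimpleGraph V) [DecidableRel G.Adj]
    (πC πR : Strat V) (init : V × V) : ℕ → PMF (List (V × V))
  | 0 => PMF.pure [init]
  | (t+1) => (play1 G πC πR init t).bind fun h =>
      (πC h).bind fun u => (πR h).bind fun w =>
        PMF.pure (h ++ [step1 G (h.getLast?.getD init) u w])

/-- The probability that cop and robber occupy different vertices at time `t`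
(capture is absorbing, so this is the probability that the robber is still free). -/
def freeProb1 (G : SimpleGraph V) [DecidableRel G.Adj]
    (πC πR : Strat V) (init : V × V) (t : ℕ) : ENNReal :=
  (play1 G πC πR init t).toOuterMeasure
    {h | (h.getLast?.getD init).1 ≠ (h.getLast?.getD init).2}

/-- The payoff: the expected number of rounds `t ≥ 0` at which cop and robber occupy
different vertices, i.e. the expected capture time. -/
def payoff (G : SimpleGraph V) [DecidableRel G.Adj]
    (πC πR : Strat V) (init : V × V) : ENNReal :=
  ∑' t : ℕ, freeProb1 G πC πR init t

/-- The (upper) value of the game started at `init`; the cop minimizes and the robber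
maximizes the expected capture time. -/
def gameValue (G : SimpleGraph V) [DecidableRel G.Adj] (init : V × V) : ENNReal :=
  ⨅ πC : Strat V, ⨆ πR : Strat V, payoff G πC πR init

/-- The cop trajectory generated in the turn-based game by the positional cop strategy
`σ` from initial cop position `x₀`, against robber trajectory `ys`:
`x_{t+1} = σ (x_t, y_t)`. -/
def copSeq (σ : V × V → V) (x₀ : V) (ys : ℕ → V) : ℕ → V
  | 0 => x₀
  | (t+1) => σ (copSeq σ x₀ ys t, ys t)

/-- The memoryless randomized cop strategy `π_C^#` for the concurrent game: from
position `(x, y)`, sample a vertex `v` uniformly at random from `N[y]` and move the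
cop to `σ (x, v)`. -/
def piCSharp (G : SimpleGraph V) [DecidableRel G.Adj] [Nonempty V]
    (σ : V × V → V) : Strat V := fun h =>
  match h.getLast? with
  | some p => (PMF.uniformOfFinset (nbhd G p.2) (nbhd_nonempty G p.2)).map fun v => σ (p.1, v)
  | none => PMF.uniformOfFintype V

/-! ### Auxiliary lemmas -/

section AuxPMF

variable {α β γ : Type*}

lemma pmf_bind_congr (p : PMF α) (f g : α → PMF β)
    (h : ∀ a ∈ p.support, f a = g a) : p.bind f = p.bind g := by
  ext b
  simp only [PMF.bind_apply]
  refine tsum_congr fun a => ?_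
  by_cases ha : p a = 0
  · simp [ha]
  · rw [h a (by simpa [PMF.mem_support_iff] using ha)]

lemma pmf_measure_congr (p : PMF α) (S T : Set α)
    (h : ∀ a ∈ p.support, (a ∈ S ↔ a ∈ T)) :
    p.toOuterMeasure S = p.toOuterMeasure T := by
  simp only [PMF.toOuterMeasure_apply]
  refine tsum_congr fun a => ?_
  classical
  rw [Set.indicator_apply, Set.indicator_apply]
  by_cases ha : p a = 0
  · split_ifs <;> simp [ha]
  · have := h a (by simpa [PMF.mem_support_iff] using ha)
    simp only [this]

lemma pmf_tsum_pure (a : α) (F : α → ENNReal) : ∑' b, (PMF.pure a) b * F b = F a := by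
  rw [tsum_eq_single a]
  · simp
  · intro b hb; simp [PMF.pure_apply, hb]

lemma pmf_tsum_bind (p : PMF α) (f : α → PMF β) (F : β → ENNReal) :
    ∑' b, (p.bind f) b * F b = ∑' a, p a * ∑' b, f a b * F b := by
  simp only [PMF.bind_apply]
  rw [show (∑' b, (∑' a, p a * f a b) * F b) = ∑' (b) (a), p a * f a b * F b from
    tsum_congr fun b => ENNReal.tsum_mul_right.symm, ENNReal.tsum_comm]
  exact tsum_congr fun a => by
    rw [← ENNReal.tsum_mul_left]
    exact tsum_congr fun b => by ring

lemma pmf_tsum_map (p : PMF α) (g : α → β) (F : β → ENNReal) :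
    ∑' b, (p.map g) b * F b = ∑' a, p a * F (g a) := by
  rw [PMF.map, pmf_tsum_bind]
  exact tsum_congr fun a => by rw [Function.comp, pmf_tsum_pure]

lemma pmf_tsum_swap (f : α → ENNReal) (g : β → ENNReal) (F : α → β → ENNReal) :
    ∑' a, f a * ∑' b, g b * F a b = ∑' b, g b * ∑' a, f a * F a b := by
  have h1 : ∀ a, f a * ∑' b, g b * F a b = ∑' b, g b * (f a * F a b) := fun a => by
    rw [← ENNReal.tsum_mul_left]
    exact tsum_congr fun b => by ring
  simp only [h1]
  rw [ENNReal.tsum_comm]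
  exact tsum_congr fun b => ENNReal.tsum_mul_left

lemma getLast?_append_of_ne_nil (l l' : List α) (h : l' ≠ []) :
    (l ++ l').getLast? = l'.getLast? := by
  rw [List.getLast?_append, List.getLast?_eq_getLast_of_ne_nil h]
  rfl

end AuxPMF
section AuxGame

variable (G : SimpleGraph V) [DecidableRel G.Adj]

lemma play1_length (πC πR : Strat V) (init : V × V) :
    ∀ t h, h ∈ (play1 G πC πR init t).support → h.length = t + 1 := by
  intro t
  induction t with
  | zero =>
    intro h hh
    simp only [play1, PMF.support_pure, Set.mem_singleton_iff] at hh
    simp [hh]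
  | succ t ih =>
    intro h hh
    simp only [play1, PMF.mem_support_bind_iff, PMF.mem_support_pure_iff] at hh
    obtain ⟨h₀, hh₀, u, _, w, _, rfl⟩ := hh
    simp [ih h₀ hh₀]

lemma play1_ne_nil (πC πR : Strat V) (init : V × V) (t : ℕ) (h : List (V × V))
    (hh : h ∈ (play1 G πC πR init t).support) : h ≠ [] := by
  intro e
  have := play1_length G πC πR init t h hh
  rw [e] at this
  simp at this

lemma play1_congr (πC πC' πR πR' : Strat V) (init : V × V)
    (hC : ∀ h : List (V × V), h ≠ [] → πC h = πC' h)
    (hR : ∀ h : List (V × V), h ≠ [] → πR h = πR' h) :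
    ∀ t, play1 G πC πR init t = play1 G πC' πR' init t := by
  intro t
  induction t with
  | zero => rfl
  | succ t ih =>
    simp only [play1, ih]
    refine pmf_bind_congr _ _ _ fun h hh => ?_
    have hne := play1_ne_nil G πC' πR' init t h hh
    rw [hC h hne, hR h hne]

lemma freeProb1_le_one (πC πR : Strat V) (init : V × V) (t : ℕ) :
    freeProb1 G πC πR init t ≤ 1 := by
  rw [freeProb1, PMF.toOuterMeasure_apply]
  refine le_trans (Summable.tsum_le_tsum (fun h => ?_) ENNReal.summable ENNReal.summable)
    (le_of_eq (play1 G πC πR init t).tsum_coe)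
  classical
  rw [Set.indicator_apply]
  split_ifs <;> simp

lemma step1_captured (p : V × V) (hp : p.1 = p.2) (u w : V) : step1 G p u w = p := by
  simp [step1, hp]

lemma play1_captured (πC πR : Strat V) (init : V × V) (hcap : init.1 = init.2) :
    ∀ t h, h ∈ (play1 G πC πR init t).support → h.getLast?.getD init = init := by
  intro t
  induction t with
  | zero =>
    intro h hh
    simp only [play1, PMF.support_pure, Set.mem_singleton_iff] at hh
    simp [hh]
  | succ t ih =>
    intro h hh
    simp only [play1, PMF.mem_support_bind_iff, PMF.mem_support_pure_iff] at hh
    obtain ⟨h₀, hh₀, u, _, w, _, rfl⟩ := hh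
    rw [getLast?_append_of_ne_nil _ _ (by simp)]
    simp [ih h₀ hh₀, step1_captured G init hcap]

lemma freeProb1_captured (πC πR : Strat V) (init : V × V) (t : ℕ)
    (hcap : init.1 = init.2) : freeProb1 G πC πR init t = 0 := by
  classical
  rw [freeProb1, PMF.toOuterMeasure_apply, ENNReal.tsum_eq_zero]
  intro h
  rw [Set.indicator_apply]
  by_cases hh : h ∈ (play1 G πC πR init t).support
  · have := play1_captured G πC πR init hcap t h hh
    rw [if_neg]
    simp [Set.mem_setOf_eq, this, hcap]
  · rw [PMF.mem_support_iff, not_not] at hh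
    split_ifs <;> simp [hh]

lemma play1_add (πC πR : Strat V) (init : V × V) (t : ℕ) : ∀ s,
    play1 G πC πR init (t + s) =
      (play1 G πC πR init t).bind fun h =>
        (play1 G (fun h' => πC (h.dropLast ++ h')) (fun h' => πR (h.dropLast ++ h'))
          (h.getLast?.getD init) s).map fun h' => h.dropLast ++ h' := by
  intro s
  induction s with
  | zero =>
    rw [Nat.add_zero]
    conv_lhs => rw [← PMF.bind_pure (play1 G πC πR init t)]
    refine pmf_bind_congr _ _ _ fun h hh => ?_
    have hne := play1_ne_nil G πC πR init t h hh
    have hlast := List.getLast?_eq_getLast_of_ne_nil hne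
    simp only [play1, PMF.pure_map, hlast, Option.getD_some]
    rw [List.dropLast_append_getLast hne]
  | succ s ih =>
    show play1 G πC πR init ((t + s) + 1) = _
    rw [play1, ih, PMF.bind_bind]
    refine pmf_bind_congr _ _ _ fun h hh => ?_
    rw [PMF.bind_map]
    conv_rhs => rw [play1]
    rw [PMF.map_bind]
    refine pmf_bind_congr _ _ _ fun h' hh' => ?_
    have hne' := play1_ne_nil G _ _ _ s h' hh'
    have hl : (h.dropLast ++ h').getLast? = h'.getLast? :=
      getLast?_append_of_ne_nil _ _ hne'
    obtain ⟨a, ha⟩ : ∃ a, h'.getLast? = some a :=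
      ⟨_, List.getLast?_eq_getLast_of_ne_nil hne'⟩
    simp only [Function.comp]
    rw [PMF.map_bind]
    refine congrArg _ (funext fun u => ?_)
    rw [PMF.map_bind]
    refine congrArg _ (funext fun w => ?_)
    rw [PMF.pure_map, hl, ha, Option.getD_some, Option.getD_some, List.append_assoc]

end AuxGame
section AuxGame2

variable (G : SimpleGraph V) [DecidableRel G.Adj]

lemma freeProb1_add (πC πR : Strat V) (init : V × V) (t s : ℕ) :
    freeProb1 G πC πR init (t + s) =
      ∑' h, play1 G πC πR init t h *
        freeProb1 G (fun h' => πC (h.dropLast ++ h')) (fun h' => πR (h.dropLast ++ h'))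
          (h.getLast?.getD init) s := by
  rw [freeProb1, play1_add, PMF.toOuterMeasure_bind_apply]
  refine tsum_congr fun h => ?_
  by_cases hp : play1 G πC πR init t h = 0
  · simp [hp]
  · congr 1
    rw [PMF.toOuterMeasure_map_apply, freeProb1]
    refine pmf_measure_congr _ _ _ fun h' hh' => ?_
    have hne' := play1_ne_nil G _ _ _ s h' hh'
    have hl : (h.dropLast ++ h').getLast? = h'.getLast? :=
      getLast?_append_of_ne_nil _ _ hne'
    obtain ⟨a, ha⟩ : ∃ a, h'.getLast? = some a :=
      ⟨_, List.getLast?_eq_getLast_of_ne_nil hne'⟩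
    simp [Set.mem_setOf_eq, Set.mem_preimage, hl, ha]

lemma freeProb1_succ (πC πR : Strat V) (init : V × V) (s : ℕ) :
    freeProb1 G πC πR init (s + 1) =
      ∑' u, πC [init] u * ∑' w, πR [init] w *
        freeProb1 G (fun h' => πC (init :: h')) (fun h' => πR (init :: h'))
          (step1 G init u w) s := by
  rw [Nat.add_comm s 1, freeProb1_add]
  have hplay : play1 G πC πR init 1 = (πC [init]).bind fun u => (πR [init]).bind fun w =>
      PMF.pure [init, step1 G init u w] := by
    show (PMF.pure [init]).bind _ = _
    rw [PMF.pure_bind]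
    simp
  rw [hplay, pmf_tsum_bind]
  refine tsum_congr fun u => congrArg _ ?_
  rw [pmf_tsum_bind]
  refine tsum_congr fun w => congrArg _ ?_
  rw [pmf_tsum_pure]
  rfl

lemma piCSharp_append [Nonempty V] (σ : V × V → V) (l h : List (V × V)) (hne : h ≠ []) :
    piCSharp G σ (l ++ h) = piCSharp G σ h := by
  unfold piCSharp
  rw [getLast?_append_of_ne_nil l h hne]

/-- The inductive capture-guarantee predicate: from cop position `x`, against any
legal robber *guess* sequence whose first element is a legal move from `y`, the
turn-based cop trajectory captures within `s` rounds. -/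
def GoodP (σ : V × V → V) (x y : V) (s : ℕ) : Prop :=
  ∀ ys : ℕ → V, ys 0 ∈ nbhd G y → (∀ t, ys (t+1) ∈ nbhd G (ys t)) →
    ∃ t < s, copSeq σ x ys (t+1) = ys t

lemma goodP_zero (σ : V × V → V) (x y : V) : ¬ GoodP G σ x y 0 := by
  intro hg
  obtain ⟨t, ht, -⟩ := hg (fun _ => y) (Finset.mem_insert_self _ _)
    (fun _ => Finset.mem_insert_self _ _)
  exact Nat.not_lt_zero t ht

lemma goodP_step (σ : V × V → V) {x y y' : V} {s : ℕ}
    (hg : GoodP G σ x y (s + 1)) (hy' : y' ∈ nbhd G y) (hne : σ (x, y') ≠ y') :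
    GoodP G σ (σ (x, y')) y' s := by
  intro ys h0 hstep
  set zs : ℕ → V := fun t => match t with | 0 => y' | (t+1) => ys t with hzs
  have hz0 : zs 0 ∈ nbhd G y := hy'
  have hzstep : ∀ t, zs (t+1) ∈ nbhd G (zs t) := by
    intro t
    cases t with
    | zero => exact h0
    | succ t => exact hstep t
  obtain ⟨t, ht, hcap⟩ := hg zs hz0 hzstep
  have key : ∀ t, copSeq σ x zs (t+1) = copSeq σ (σ (x, y')) ys t := by
    intro t
    induction t with
    | zero => rfl
    | succ t ih =>
      show σ (copSeq σ x zs (t+1), zs (t+1)) = σ (copSeq σ (σ (x,y')) ys t, ys t)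
      rw [ih]
  cases t with
  | zero => exact absurd hcap hne
  | succ t =>
    refine ⟨t, Nat.lt_of_succ_lt_succ ht, ?_⟩
    rw [← key (t+1)]
    exact hcap

end AuxGame2
section Core

variable (G : SimpleGraph V) [DecidableRel G.Adj] [Nonempty V]

lemma core_bound (σ : V × V → V) (hσ : ∀ x y : V, σ (x, y) ∈ nbhd G x) :
    ∀ s : ℕ, ∀ (πR : Strat V) (x y : V), GoodP G σ x y s →
      freeProb1 G (piCSharp G σ) πR (x, y) s
        + ((Fintype.card V : ENNReal))⁻¹ ^ s ≤ 1 := by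
  have hεle1 : ((Fintype.card V : ENNReal))⁻¹ ≤ 1 :=
    ENNReal.inv_le_one.mpr (by exact_mod_cast Fintype.card_pos)
  intro s
  induction s with
  | zero => intro πR x y hg; exact absurd hg (goodP_zero G σ x y)
  | succ s ih =>
    intro πR x y hg
    by_cases hxy : x = y
    · rw [freeProb1_captured G _ _ _ _ hxy, zero_add]
      exact pow_le_one' hεle1 _
    rw [freeProb1_succ]
    have hpi : piCSharp G σ [(x,y)] =
        (PMF.uniformOfFinset (nbhd G y) (nbhd_nonempty G y)).map fun v => σ (x, v) := rfl
    rw [hpi, pmf_tsum_map, pmf_tsum_swap]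
    have hshift : ∀ (πR₂ : Strat V) (q : V × V),
        freeProb1 G (fun h' => piCSharp G σ ((x,y) :: h')) πR₂ q s
          = freeProb1 G (piCSharp G σ) πR₂ q s := by
      intro πR₂ q
      unfold freeProb1
      rw [show play1 G (fun h' => piCSharp G σ ((x,y) :: h')) πR₂ q s
            = play1 G (piCSharp G σ) πR₂ q s from
        play1_congr G _ _ _ _ q
          (fun h hne => piCSharp_append G σ [(x,y)] h hne) (fun _ _ => rfl) s]
    simp only [hshift]
    set εc : ENNReal := ((Fintype.card V : ENNReal))⁻¹ with hεc
    have key : ∀ w : V,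
        (∑' v, (PMF.uniformOfFinset (nbhd G y) (nbhd_nonempty G y)) v *
          freeProb1 G (piCSharp G σ) (fun h' => πR ((x,y) :: h'))
            (step1 G (x,y) (σ (x,v)) w) s) + εc ^ (s+1) ≤ 1 := by
      intro w
      set F : V → ENNReal := fun v => freeProb1 G (piCSharp G σ) (fun h' => πR ((x,y) :: h'))
        (step1 G (x,y) (σ (x,v)) w) s with hF
      set w' : V := if w ∈ nbhd G y then w else y with hw'
      have hw'mem : w' ∈ nbhd G y := by
        rw [hw']
        split
        · assumption
        · exact Finset.mem_insert_self _ _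
      set m : ENNReal := ((nbhd G y).card : ENNReal) with hm
      have hm0 : m ≠ 0 := by
        rw [hm]
        exact_mod_cast Finset.card_ne_zero_of_mem hw'mem
      have hmtop : m ≠ ⊤ := ENNReal.natCast_ne_top _
      rw [tsum_fintype]
      have hterm : ∀ v : V, (PMF.uniformOfFinset (nbhd G y) (nbhd_nonempty G y)) v * F v
          = if v ∈ nbhd G y then m⁻¹ * F v else 0 := by
        intro v
        by_cases hv : v ∈ nbhd G y
        · simp [PMF.uniformOfFinset_apply, hv, ← hm]
        · simp [PMF.uniformOfFinset_apply, hv]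
      rw [Finset.sum_congr rfl (fun v _ => hterm v), Finset.sum_ite_mem, Finset.univ_inter,
        ← Finset.add_sum_erase _ _ hw'mem]
      -- the crucial bound on the "correct guess" term
      have hq : step1 G (x,y) (σ (x,w')) w =
          if σ (x,w') = y ∧ w' = x then (σ (x,w'), σ (x,w')) else (σ (x,w'), w') := by
        show (if (x,y).1 = (x,y).2 then (x,y) else _) = _
        rw [if_neg hxy]
        simp only [hσ x w', if_true, ← hw']
      have h2 : F w' + εc ^ s ≤ 1 := by
        rw [hF]
        simp only []
        rw [hq]
        by_cases hep : σ (x,w') = y ∧ w' = x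
        · rw [if_pos hep, freeProb1_captured G _ _ _ _ rfl, zero_add]
          exact pow_le_one' hεle1 _
        · rw [if_neg hep]
          by_cases hc2 : σ (x,w') = w'
          · rw [freeProb1_captured G _ _ _ _ hc2, zero_add]
            exact pow_le_one' hεle1 _
          · exact ih (fun h' => πR ((x,y) :: h')) (σ (x,w')) w'
              (goodP_step G σ hg hw'mem hc2)
      have h3 : m⁻¹ * F w' + m⁻¹ * εc ^ s ≤ m⁻¹ := by
        rw [← mul_add]
        calc m⁻¹ * (F w' + εc ^ s) ≤ m⁻¹ * 1 := mul_le_mul_right h2 _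
          _ = m⁻¹ := mul_one _
      have hcard : εc ≤ m⁻¹ := by
        rw [hεc, hm]
        exact ENNReal.inv_le_inv' (by exact_mod_cast Finset.card_le_univ (nbhd G y))
      have h4 : εc ^ (s+1) ≤ m⁻¹ * εc ^ s := by
        rw [pow_succ']
        exact mul_le_mul_left hcard _
      have h5 : (∑ v ∈ (nbhd G y).erase w', m⁻¹ * F v) ≤ ∑ _v ∈ (nbhd G y).erase w', m⁻¹ :=
        Finset.sum_le_sum fun v _ => by
          calc m⁻¹ * F v ≤ m⁻¹ * 1 := mul_le_mul_right (freeProb1_le_one G _ _ _ _) _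
            _ = m⁻¹ := mul_one _
      have h1m : (1 : ENNReal) ≤ m := by
        rw [hm]
        exact_mod_cast Finset.card_pos.mpr ⟨w', hw'mem⟩
      have hsum1 : m⁻¹ + ∑ _v ∈ (nbhd G y).erase w', m⁻¹ = 1 := by
        rw [Finset.sum_const, Finset.card_erase_of_mem hw'mem, nsmul_eq_mul,
          ENNReal.natCast_sub, Nat.cast_one, ← hm]
        nth_rewrite 1 [← one_mul m⁻¹]
        rw [← add_mul, add_tsub_cancel_of_le h1m, ENNReal.mul_inv_cancel hm0 hmtop]
      calc m⁻¹ * F w' + (∑ v ∈ (nbhd G y).erase w', m⁻¹ * F v) + εc ^ (s+1)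
          ≤ m⁻¹ * F w' + (∑ _v ∈ (nbhd G y).erase w', m⁻¹) + m⁻¹ * εc ^ s :=
            add_le_add (add_le_add_right h5 _) h4
        _ = (m⁻¹ * F w' + m⁻¹ * εc ^ s) + ∑ _v ∈ (nbhd G y).erase w', m⁻¹ := by ring
        _ ≤ m⁻¹ + ∑ _v ∈ (nbhd G y).erase w', m⁻¹ := add_le_add_left h3 _
        _ = 1 := hsum1
    calc (∑' w, (πR [(x,y)]) w * ∑' v, (PMF.uniformOfFinset (nbhd G y) (nbhd_nonempty G y)) v *
          freeProb1 G (piCSharp G σ) (fun h' => πR ((x,y) :: h'))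
            (step1 G (x,y) (σ (x,v)) w) s) + εc ^ (s+1)
        = ∑' w, (πR [(x,y)]) w * ((∑' v, (PMF.uniformOfFinset (nbhd G y) (nbhd_nonempty G y)) v *
          freeProb1 G (piCSharp G σ) (fun h' => πR ((x,y) :: h'))
            (step1 G (x,y) (σ (x,v)) w) s) + εc ^ (s+1)) := by
          simp only [mul_add]
          rw [ENNReal.tsum_add, ENNReal.tsum_mul_right, PMF.tsum_coe, one_mul]
      _ ≤ ∑' w, (πR [(x,y)]) w * 1 :=
          Summable.tsum_le_tsum (fun w => mul_le_mul_right (key w) _) ENNReal.summable ENNReal.summable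
      _ = 1 := by rw [tsum_congr fun w => mul_one _, PMF.tsum_coe]

end Core
section Final

variable (G : SimpleGraph V) [DecidableRel G.Adj] [Nonempty V]

lemma contr_bound (σ : V × V → V) (hσ : ∀ x y : V, σ (x, y) ∈ nbhd G x) (T : ℕ)
    (hT' : ∀ x y : V, GoodP G σ x y T) (πR : Strat V) (init : V × V) (t : ℕ) :
    freeProb1 G (piCSharp G σ) πR init (t + T) ≤
      (1 - ((Fintype.card V : ENNReal))⁻¹ ^ T) * freeProb1 G (piCSharp G σ) πR init t := by
  rw [freeProb1_add]
  conv_rhs => rw [freeProb1, PMF.toOuterMeasure_apply, ← ENNReal.tsum_mul_left]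
  refine Summable.tsum_le_tsum (fun h => ?_) ENNReal.summable ENNReal.summable
  classical
  by_cases hp : play1 G (piCSharp G σ) πR init t h = 0
  · rw [hp, zero_mul]
    exact zero_le
  · have hmem : h ∈ (play1 G (piCSharp G σ) πR init t).support :=
      (PMF.mem_support_iff _ h).mpr hp
    have hne := play1_ne_nil G _ _ init t h hmem
    have hsh : freeProb1 G (fun h' => piCSharp G σ (h.dropLast ++ h'))
        (fun h' => πR (h.dropLast ++ h')) (h.getLast?.getD init) T
        = freeProb1 G (piCSharp G σ) (fun h' => πR (h.dropLast ++ h'))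
            (h.getLast?.getD init) T := by
      unfold freeProb1
      rw [show play1 G (fun h' => piCSharp G σ (h.dropLast ++ h'))
            (fun h' => πR (h.dropLast ++ h')) (h.getLast?.getD init) T
          = play1 G (piCSharp G σ) (fun h' => πR (h.dropLast ++ h'))
            (h.getLast?.getD init) T from
        play1_congr G _ _ _ _ _
          (fun h'' hne'' => piCSharp_append G σ h.dropLast h'' hne'') (fun _ _ => rfl) T]
    rw [hsh]
    set q := h.getLast?.getD init with hqdef
    by_cases hcap : q.1 = q.2
    · rw [freeProb1_captured G _ _ _ _ hcap, mul_zero]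
      exact zero_le
    · have hcore := core_bound G σ hσ T (fun h' => πR (h.dropLast ++ h')) q.1 q.2 (hT' q.1 q.2)
      rw [Prod.mk.eta] at hcore
      have hle : freeProb1 G (piCSharp G σ) (fun h' => πR (h.dropLast ++ h')) q T
          ≤ 1 - ((Fintype.card V : ENNReal))⁻¹ ^ T :=
        ENNReal.le_sub_of_add_le_right
          (ENNReal.pow_ne_top (ENNReal.inv_ne_top.mpr (by exact_mod_cast Fintype.card_pos.ne'))) hcore
      have hind : Set.indicator
          {h' : List (V × V) | (h'.getLast?.getD init).1 ≠ (h'.getLast?.getD init).2}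
          (play1 G (piCSharp G σ) πR init t) h = play1 G (piCSharp G σ) πR init t h :=
        Set.indicator_of_mem
          (show h ∈ {h' : List (V × V) |
            (h'.getLast?.getD init).1 ≠ (h'.getLast?.getD init).2} from hcap) _
      rw [hind]
      calc play1 G (piCSharp G σ) πR init t h *
            freeProb1 G (piCSharp G σ) (fun h' => πR (h.dropLast ++ h')) q T
          ≤ play1 G (piCSharp G σ) πR init t h *
            (1 - ((Fintype.card V : ENNReal))⁻¹ ^ T) := mul_le_mul_right hle _
        _ = (1 - ((Fintype.card V : ENNReal))⁻¹ ^ T) *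
            play1 G (piCSharp G σ) πR init t h := mul_comm _ _

lemma iterate_bound (σ : V × V → V) (hσ : ∀ x y : V, σ (x, y) ∈ nbhd G x) (T : ℕ)
    (hT' : ∀ x y : V, GoodP G σ x y T) (πR : Strat V) (init : V × V) :
    ∀ k : ℕ, freeProb1 G (piCSharp G σ) πR init (k * T) ≤
      (1 - ((Fintype.card V : ENNReal))⁻¹ ^ T) ^ k := by
  intro k
  induction k with
  | zero => simpa using freeProb1_le_one G (piCSharp G σ) πR init 0
  | succ k ih =>
    have hmul : (k+1) * T = k * T + T := by ring
    rw [hmul]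
    calc freeProb1 G (piCSharp G σ) πR init (k * T + T)
        ≤ (1 - ((Fintype.card V : ENNReal))⁻¹ ^ T) *
            freeProb1 G (piCSharp G σ) πR init (k * T) :=
          contr_bound G σ hσ T hT' πR init (k * T)
      _ ≤ (1 - ((Fintype.card V : ENNReal))⁻¹ ^ T) *
            (1 - ((Fintype.card V : ENNReal))⁻¹ ^ T) ^ k := mul_le_mul_right ih _
      _ = (1 - ((Fintype.card V : ENNReal))⁻¹ ^ T) ^ (k+1) := (pow_succ' _ _).symm

end Final
/-- if the positional cop strategy `σ` guarantees capture within `T`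
rounds in the turn-based game, then the memoryless randomized strategy `π_C^#`
captures the robber with probability one in the concurrent game: the set of infinite
play histories in which the robber is never captured has probability zero. -/
theorem piCSharp_captures_almost_surely (G : SimpleGraph V) [DecidableRel G.Adj]
    [Nonempty V] (hconn : G.Connected) (σ : V × V → V)
    (hσ : ∀ x y : V, σ (x, y) ∈ nbhd G x) (T : ℕ)
    (hT : ∀ (x₀ : V) (ys : ℕ → V), (∀ t, ys (t+1) ∈ nbhd G (ys t)) →
      ∃ t < T, copSeq σ x₀ ys (t+1) = ys t) :
    ∀ (πR : Strat V) (init : V × V),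
      (⨅ t : ℕ, freeProb1 G (piCSharp G σ) πR init t) = 0 := by
  intro πR init
  refine le_antisymm ?_ zero_le
  have hT' : ∀ x y : V, GoodP G σ x y T := fun x y ys _ hstep => hT x ys hstep
  have hrlt : (1 - ((Fintype.card V : ENNReal))⁻¹ ^ T) < 1 :=
    ENNReal.sub_lt_self ENNReal.one_ne_top one_ne_zero
      (pow_ne_zero T (ENNReal.inv_ne_zero.mpr (ENNReal.natCast_ne_top _)))
  have htend := ENNReal.tendsto_pow_atTop_nhds_zero_of_lt_one hrlt
  refine ge_of_tendsto' htend fun k => ?_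
  exact le_trans (iInf_le _ (k * T)) (iterate_bound G σ hσ T hT' πR init k)
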